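/- For all integers l ≥ 1, s_1,…,s_l ≥ 1 and r_1,…,r_l ≥ 0, the derivation q·d/dq on ℚ[[q]] satisfies q(d/dq)[s_1,…,s_l ; r_1,…,r_l] = Σ_{j=1}^{l} s_j(r_j+1)·[s_1,…,s_{j−1}, s_j+1, s_{j+1},…,s_l ; r_1,…,r_{j−1}, r_j+1, r_{j+1},…,r_l]. In particular q·d/dq maps the ℚ-span of bi-brackets of weight ≤ k and depth ≤ l into the ℚ-span of bi-brackets of weight ≤ k+2 and depth ≤ l. -/

import Mathlib

noncomputable def biBracket (l : ℕ) (s r : Fin l → ℕ) : PowerSeries ℚ :=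
  PowerSeries.mk fun m =>
    ∑' uv : {p : (Fin l → ℕ) × (Fin l → ℕ) //
        StrictAnti p.1 ∧ (∀ i, 0 < p.1 i) ∧ (∀ i, 0 < p.2 i)},
      if (∑ j, uv.1.1 j * uv.1.2 j) = m then
        ∏ j, ((uv.1.1 j : ℚ) ^ r j / (r j).factorial) *
             ((uv.1.2 j : ℚ) ^ (s j - 1) / (s j - 1).factorial)
      else 0

noncomputable def qd (f : PowerSeries ℚ) : PowerSeries ℚ :=
  PowerSeries.mk fun n => (n : ℚ) * PowerSeries.coeff n f

abbrev Idx (l : ℕ) := {p : (Fin l → ℕ) × (Fin l → ℕ) //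
    StrictAnti p.1 ∧ (∀ i, 0 < p.1 i) ∧ (∀ i, 0 < p.2 i)}

lemma summable_term (l n : ℕ) (f : Fin l → ℕ → ℕ → ℚ) :
    Summable (fun uv : Idx l =>
      if (∑ j, uv.1.1 j * uv.1.2 j) = n then ∏ j, f j (uv.1.1 j) (uv.1.2 j) else 0) := by
  classical
  set F := fun uv : Idx l =>
      if (∑ j, uv.1.1 j * uv.1.2 j) = n then ∏ j, f j (uv.1.1 j) (uv.1.2 j) else 0 with hF
  have hT : (Set.univ.pi (fun _ : Fin l => Set.Iic n) ×ˢ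
      Set.univ.pi (fun _ : Fin l => Set.Iic n) : Set ((Fin l → ℕ) × (Fin l → ℕ))).Finite :=
    (Set.Finite.pi fun _ => Set.finite_Iic n).prod (Set.Finite.pi fun _ => Set.finite_Iic n)
  have hS : (Subtype.val ⁻¹' (Set.univ.pi (fun _ : Fin l => Set.Iic n) ×ˢ
      Set.univ.pi (fun _ : Fin l => Set.Iic n)) : Set (Idx l)).Finite :=
    hT.preimage Subtype.val_injective.injOn
  apply summable_of_ne_finset_zero (s := hS.toFinset)
  intro uv huv
  simp only [Set.Finite.mem_toFinset, Set.mem_preimage, Set.mem_prod, Set.mem_pi,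
    Set.mem_univ, Set.mem_Iic, forall_true_left] at huv
  rw [hF]
  by_contra h
  simp only [ite_eq_right_iff, not_forall] at h
  obtain ⟨hsum, -⟩ := h
  apply huv
  constructor <;> intro j
  · calc uv.1.1 j ≤ uv.1.1 j * uv.1.2 j := Nat.le_mul_of_pos_right _ (uv.2.2.2 j)
      _ ≤ ∑ i, uv.1.1 i * uv.1.2 i := Finset.single_le_sum (f := fun i => uv.1.1 i * uv.1.2 i) (fun _ _ => Nat.zero_le _) (Finset.mem_univ j)
      _ = n := hsum
  · calc uv.1.2 j ≤ uv.1.1 j * uv.1.2 j := Nat.le_mul_of_pos_left _ (uv.2.2.1 j)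
      _ ≤ ∑ i, uv.1.1 i * uv.1.2 i := Finset.single_le_sum (f := fun i => uv.1.1 i * uv.1.2 i) (fun _ _ => Nat.zero_le _) (Finset.mem_univ j)
      _ = n := hsum

lemma scalar_id (u v sj rj : ℕ) (hs : 1 ≤ sj) :
    ((u : ℚ) * v) * ((u : ℚ) ^ rj / rj.factorial * ((v : ℚ) ^ (sj - 1) / (sj - 1).factorial)) =
    ((sj : ℚ) * ((rj : ℚ) + 1)) *
      ((u : ℚ) ^ (rj + 1) / (rj + 1).factorial * ((v : ℚ) ^ sj / sj.factorial)) := by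
  obtain ⟨k, rfl⟩ : ∃ k, sj = k + 1 := ⟨sj - 1, by omega⟩
  simp only [Nat.add_sub_cancel, Nat.factorial_succ]
  have h1 : (rj.factorial : ℚ) ≠ 0 := Nat.cast_ne_zero.mpr rj.factorial_ne_zero
  have h2 : (k.factorial : ℚ) ≠ 0 := Nat.cast_ne_zero.mpr k.factorial_ne_zero
  push_cast
  field_simp
  ring

lemma qd_formula (l : ℕ) (s r : Fin l → ℕ) (hs : ∀ j, 1 ≤ s j) :
    qd (biBracket l s r) =
      ∑ j, ((s j : ℚ) * ((r j : ℚ) + 1)) •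
        biBracket l (Function.update s j (s j + 1)) (Function.update r j (r j + 1)) := by
  classical
  ext n
  rw [map_sum]
  simp only [qd, biBracket, PowerSeries.coeff_mk, PowerSeries.coeff_smul, smul_eq_mul,
    PowerSeries.coeff_mk]
  rw [← tsum_mul_left]
  have hsummable : ∀ j : Fin l, Summable (fun uv : Idx l =>
      ((s j : ℚ) * ((r j : ℚ) + 1)) *
      (if (∑ i, uv.1.1 i * uv.1.2 i) = n then
        ∏ i, ((uv.1.1 i : ℚ) ^ Function.update r j (r j + 1) i /
              (Function.update r j (r j + 1) i).factorial) *
             ((uv.1.2 i : ℚ) ^ (Function.update s j (s j + 1) i - 1) /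
              (Function.update s j (s j + 1) i - 1).factorial)
      else 0)) := fun j =>
    (summable_term l n (fun i a b =>
      ((a : ℚ) ^ Function.update r j (r j + 1) i / (Function.update r j (r j + 1) i).factorial) *
      ((b : ℚ) ^ (Function.update s j (s j + 1) i - 1) /
        (Function.update s j (s j + 1) i - 1).factorial))).mul_left _
  rw [Finset.sum_congr rfl (fun j (_ : j ∈ Finset.univ) => (tsum_mul_left).symm),
      ← Summable.tsum_finsetSum (fun j _ => hsummable j)]
  apply tsum_congr
  intro uv
  obtain ⟨⟨u, v⟩, hanti, hu, hv⟩ := uv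
  by_cases h : (∑ i, u i * v i) = n
  · simp only [h, if_pos rfl, if_true]
    have hn : (n : ℚ) = ∑ j, ((u j : ℚ) * v j) := by
      rw [← h]; push_cast; rfl
    rw [hn, Finset.sum_mul]
    apply Finset.sum_congr rfl
    intro j _
    rw [← Finset.mul_prod_erase _ _ (Finset.mem_univ j),
        ← Finset.mul_prod_erase _ _ (Finset.mem_univ j)]
    have herase : ∀ i ∈ Finset.univ.erase j,
        ((u i : ℚ) ^ Function.update r j (r j + 1) i /
          (Function.update r j (r j + 1) i).factorial) *
        ((v i : ℚ) ^ (Function.update s j (s j + 1) i - 1) /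
          (Function.update s j (s j + 1) i - 1).factorial) =
        ((u i : ℚ) ^ r i / (r i).factorial) *
        ((v i : ℚ) ^ (s i - 1) / (s i - 1).factorial) := by
      intro i hi
      rw [Function.update_of_ne (Finset.ne_of_mem_erase hi),
          Function.update_of_ne (Finset.ne_of_mem_erase hi)]
    rw [Finset.prod_congr rfl herase]
    have key : ((u j : ℚ) * (v j)) *
        ((u j : ℚ) ^ r j / (r j).factorial * ((v j : ℚ) ^ (s j - 1) / (s j - 1).factorial)) =
        ((s j : ℚ) * ((r j : ℚ) + 1)) *
        ((u j : ℚ) ^ Function.update r j (r j + 1) j /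
            (Function.update r j (r j + 1) j).factorial *
          ((v j : ℚ) ^ (Function.update s j (s j + 1) j - 1) /
            (Function.update s j (s j + 1) j - 1).factorial)) := by
      simp only [Function.update_self, Nat.add_sub_cancel]
      exact scalar_id (u j) (v j) (s j) (r j) (hs j)
    rw [← mul_assoc, key, mul_assoc]
  · simp [h]

lemma qd_zero : qd 0 = 0 := by
  ext n; simp [qd]

lemma qd_add (f g : PowerSeries ℚ) : qd (f + g) = qd f + qd g := by
  ext n; simp [qd, mul_add]

lemma qd_smul (a : ℚ) (f : PowerSeries ℚ) : qd (a • f) = a • qd f := by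
  ext n; simp [qd]; ring

theorem qd_biBracket :
    (∀ (l : ℕ), 1 ≤ l → ∀ (s r : Fin l → ℕ), (∀ j, 1 ≤ s j) →
      qd (biBracket l s r) =
        ∑ j, ((s j : ℚ) * ((r j : ℚ) + 1)) •
          biBracket l (Function.update s j (s j + 1)) (Function.update r j (r j + 1))) ∧
    (∀ (k l : ℕ) (f : PowerSeries ℚ),
      f ∈ Submodule.span ℚ {g | ∃ (t : ℕ) (s r : Fin t → ℕ), (∀ j, 1 ≤ s j) ∧ t ≤ l ∧
        (∑ j, s j) + (∑ j, r j) ≤ k ∧ g = biBracket t s r} →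
      qd f ∈ Submodule.span ℚ {g | ∃ (t : ℕ) (s r : Fin t → ℕ), (∀ j, 1 ≤ s j) ∧ t ≤ l ∧
        (∑ j, s j) + (∑ j, r j) ≤ k + 2 ∧ g = biBracket t s r}) := by
  classical
  constructor
  · intro l _ s r hs
    exact qd_formula l s r hs
  · intro k l f hf
    induction hf using Submodule.span_induction with
    | mem g hg =>
      obtain ⟨t, s, r, hs, htl, hw, rfl⟩ := hg
      rw [qd_formula t s r hs]
      apply Submodule.sum_mem
      intro j _
      apply Submodule.smul_mem
      apply Submodule.subset_span
      refine ⟨t, _, _, ?_, htl, ?_, rfl⟩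
      · intro i
        by_cases h : i = j
        · subst h; simp
        · rw [Function.update_of_ne h]; exact hs i
      · have h1 : ∑ i, Function.update s j (s j + 1) i = (∑ i, s i) + 1 := by
          rw [Finset.sum_update_of_mem (Finset.mem_univ j),
            ← Finset.add_sum_erase _ s (Finset.mem_univ j)]
          rw [Finset.sdiff_singleton_eq_erase]
          ring
        have h2 : ∑ i, Function.update r j (r j + 1) i = (∑ i, r i) + 1 := by
          rw [Finset.sum_update_of_mem (Finset.mem_univ j),
            ← Finset.add_sum_erase _ r (Finset.mem_univ j)]
          rw [Finset.sdiff_singleton_eq_erase]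
          ring
        omega
    | zero =>
      rw [qd_zero]; exact Submodule.zero_mem _
    | add x y hx hy ihx ihy =>
      rw [qd_add]; exact Submodule.add_mem _ ihx ihy
    | smul a x hx ih =>
      rw [qd_smul]; exact Submodule.smul_mem _ _ ih
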